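/- With the coefficients Ξ_k as defined in the context, ∑_{k=0}^{M} k·|Ξ_k| ≤ C·M/16, where C = 32·(1/3 + 1/π). -/

import Mathlib

open Real

/-- `g(u) = -(1-u)·cot(πu) - 1/π` for `u < 1`, and `g(u) = 0` for `u ≥ 1`. -/
noncomputable def selbergG (u : ℝ) : ℝ :=
  if u < 1 then -(1 - u) * Real.cot (Real.pi * u) - 1 / Real.pi else 0

/-- The coefficients `Ξ_k`, `0 ≤ k ≤ M`, of the Beurling–Selberg minorant:
`Ξ_k = ((β-α)/π)·[k=0] - (1 - k/(M+1))·(cos kα + cos kβ)/(M+1)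
       - g(k/(M+1))·(sin kβ - sin kα)/(M+1)
       + (1 - (k+2)/(M+1))·(cos (k+2)α + cos (k+2)β)/(M+1)
       + g((k+2)/(M+1))·(sin (k+2)β - sin (k+2)α)/(M+1)`,
where for `k = 0` the term involving `g(k/(M+1))` is interpreted as `0`, and for
`k ∈ {M-1, M}` the last two terms are omitted. -/
noncomputable def selbergXi (α β : ℝ) (M k : ℕ) : ℝ :=
  (if k = 0 then (β - α) / Real.pi else 0)
    - (1 - (k : ℝ) / (M + 1)) * (Real.cos (k * α) + Real.cos (k * β)) / (M + 1)
    - (if k = 0 then 0 else selbergG ((k : ℝ) / (M + 1)))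
        * (Real.sin (k * β) - Real.sin (k * α)) / (M + 1)
    + (if k + 2 ≤ M then
        (1 - ((k : ℝ) + 2) / (M + 1)) * (Real.cos ((k + 2) * α) + Real.cos ((k + 2) * β)) / (M + 1)
          + selbergG (((k : ℝ) + 2) / (M + 1))
            * (Real.sin ((k + 2) * β) - Real.sin ((k + 2) * α)) / (M + 1)
      else 0)

lemma aux_sin_pos {u : ℝ} (h0 : 0 < u) (h1 : u < 1) : 0 < Real.sin (Real.pi * u) :=
  Real.sin_pos_of_pos_of_lt_pi (by positivity) (by nlinarith [Real.pi_pos])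

lemma aux_cot_le_inv {x : ℝ} (h0 : 0 < x) (h1 : x < Real.pi) : Real.cot x ≤ 1 / x := by
  have hs : 0 < Real.sin x := Real.sin_pos_of_pos_of_lt_pi h0 h1
  rw [Real.cot_eq_cos_div_sin, div_le_div_iff₀ hs h0]
  rcases le_or_gt (Real.cos x) 0 with hc | hc
  · nlinarith
  · have hx2 : x < Real.pi / 2 := by
      by_contra hcon
      push_neg at hcon
      have := Real.cos_nonpos_of_pi_div_two_le_of_le hcon (by linarith [Real.pi_pos])
      linarith
    have h3 := Real.lt_tan h0 hx2
    rw [Real.tan_eq_sin_div_cos, lt_div_iff₀ hc] at h3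
    nlinarith

lemma aux_cot_pi_sub (x : ℝ) : Real.cot (Real.pi - x) = - Real.cot x := by
  rw [Real.cot_eq_cos_div_sin, Real.cot_eq_cos_div_sin, Real.cos_pi_sub, Real.sin_pi_sub, neg_div]

lemma aux_cot_sign {u : ℝ} (h0 : 0 < u) (h1 : u < 1) :
    0 ≤ (1 - 2*u) * Real.cot (Real.pi * u) := by
  have hs := aux_sin_pos h0 h1
  have hπ := Real.pi_pos
  rw [Real.cot_eq_cos_div_sin]
  rcases le_or_gt u (1/2) with h | h
  · have hc : 0 ≤ Real.cos (Real.pi * u) :=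
      Real.cos_nonneg_of_mem_Icc ⟨by nlinarith, by nlinarith⟩
    exact mul_nonneg (by linarith) (div_nonneg hc hs.le)
  · have hc : Real.cos (Real.pi * u) ≤ 0 :=
      Real.cos_nonpos_of_pi_div_two_le_of_le (by nlinarith) (by nlinarith)
    have h3 : (0:ℝ) ≤ -(Real.cos (Real.pi*u) / Real.sin (Real.pi*u)) :=
      neg_nonneg.2 (div_nonpos_of_nonpos_of_nonneg hc hs.le)
    nlinarith [mul_nonneg (show (0:ℝ) ≤ -(1-2*u) by linarith) h3]

lemma aux_negG {u : ℝ} (h1 : u < 1) :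
    -selbergG u = (1 - u) * Real.cot (Real.pi * u) + 1 / Real.pi := by
  rw [selbergG, if_pos h1]; ring

lemma aux_g_nonpos {u : ℝ} (h0 : 0 < u) : selbergG u ≤ 0 := by
  have hπ := Real.pi_pos
  rcases lt_or_ge u 1 with h1 | h1
  · rw [selbergG, if_pos h1]
    rcases le_or_gt u (1/2) with h | h
    · have hs := aux_sin_pos h0 h1
      have hc : 0 ≤ Real.cos (Real.pi*u) :=
        Real.cos_nonneg_of_mem_Icc ⟨by nlinarith, by nlinarith⟩
      have h2 : 0 ≤ (1-u) * Real.cot (Real.pi*u) := by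
        rw [Real.cot_eq_cos_div_sin]
        exact mul_nonneg (by linarith) (div_nonneg hc hs.le)
      have h3 : 0 < 1/Real.pi := by positivity
      nlinarith
    · have hv0 : 0 < 1 - u := by linarith
      have key : Real.cot (Real.pi * u) = - Real.cot (Real.pi * (1-u)) := by
        rw [show Real.pi * u = Real.pi - Real.pi*(1-u) by ring, aux_cot_pi_sub]
      rw [key]
      have hb : Real.cot (Real.pi*(1-u)) ≤ 1/(Real.pi*(1-u)) :=
        aux_cot_le_inv (by positivity) (by nlinarith)
      have h2 : (1-u) * Real.cot (Real.pi*(1-u)) ≤ (1-u) * (1/(Real.pi*(1-u))) :=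
        mul_le_mul_of_nonneg_left hb hv0.le
      have heq : (1-u)*(1/(Real.pi*(1-u))) = 1/Real.pi := by
        field_simp
      nlinarith
  · rw [selbergG, if_neg (not_lt.2 h1)]

lemma aux_abs_g {u : ℝ} (h0 : 0 < u) : |selbergG u| = -selbergG u :=
  abs_of_nonpos (aux_g_nonpos h0)

lemma sum_Ioo_reflect (N : ℕ) (f : ℕ → ℝ) :
    ∑ k ∈ Finset.Ioo 0 N, f k = ∑ k ∈ Finset.Ioo 0 N, f (N - k) := by
  apply Finset.sum_nbij' (fun k => N - k) (fun k => N - k)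
  · intro a ha
    simp only [Finset.mem_Ioo] at *
    omega
  · intro a ha
    simp only [Finset.mem_Ioo] at *
    omega
  · intro a ha
    simp only [Finset.mem_Ioo] at ha
    omega
  · intro a ha
    simp only [Finset.mem_Ioo] at ha
    omega
  · intro a ha
    simp only [Finset.mem_Ioo] at ha
    congr 1
    omega

lemma sum_range_cast (n : ℕ) : ∑ k ∈ Finset.range n, (k:ℝ) = n*(n-1)/2 := by
  induction n with
  | zero => simp
  | succ m ih => rw [Finset.sum_range_succ, ih]; push_cast; ring

lemma sum_range_cast_sq (n : ℕ) : ∑ k ∈ Finset.range n, (k:ℝ)^2 = n*(n-1)*(2*n-1)/6 := by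
  induction n with
  | zero => simp
  | succ m ih => rw [Finset.sum_range_succ, ih]; push_cast; ring

lemma pair_sum_zero (N : ℕ) :
    ∑ k ∈ Finset.Ioo 0 N, ((k:ℝ)*(1 - (k:ℝ)/(N:ℝ))*Real.cot (Real.pi * ((k:ℝ)/(N:ℝ)))) = 0 := by
  have h2 := sum_Ioo_reflect N
    (fun k => (k:ℝ)*(1 - (k:ℝ)/(N:ℝ))*Real.cot (Real.pi * ((k:ℝ)/(N:ℝ))))
  have h3 : ∑ k ∈ Finset.Ioo 0 N,
        (((N-k:ℕ):ℝ)*(1 - ((N-k:ℕ):ℝ)/(N:ℝ))*Real.cot (Real.pi * (((N-k:ℕ):ℝ)/(N:ℝ))))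
      = ∑ k ∈ Finset.Ioo 0 N, (-((k:ℝ)*(1 - (k:ℝ)/(N:ℝ))*Real.cot (Real.pi * ((k:ℝ)/(N:ℝ))))) := by
    apply Finset.sum_congr rfl
    intro k hk
    simp only [Finset.mem_Ioo] at hk
    have hν : (0:ℝ) < (N:ℝ) := by
      have : 0 < N := lt_trans hk.1 hk.2
      exact_mod_cast this
    rw [Nat.cast_sub hk.2.le]
    have hcot : Real.cot (Real.pi * (((N:ℝ) - (k:ℝ))/(N:ℝ)))
        = - Real.cot (Real.pi * ((k:ℝ)/(N:ℝ))) := by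
      rw [show Real.pi * (((N:ℝ) - (k:ℝ))/(N:ℝ)) = Real.pi - Real.pi * ((k:ℝ)/(N:ℝ)) by
        field_simp, aux_cot_pi_sub]
    rw [hcot]
    have h1n : 1 - ((N:ℝ)-(k:ℝ))/(N:ℝ) = (k:ℝ)/(N:ℝ) := by field_simp; ring
    have h2n : 1 - (k:ℝ)/(N:ℝ) = ((N:ℝ)-(k:ℝ))/(N:ℝ) := by field_simp
    rw [h1n, h2n]
    ring
  rw [h3, Finset.sum_neg_distrib] at h2
  linarith

lemma pair_sum_nonpos (N : ℕ) :
    ∑ k ∈ Finset.Ioo 0 N,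
      (((k:ℝ)-2)*(1 - (k:ℝ)/(N:ℝ))*Real.cot (Real.pi * ((k:ℝ)/(N:ℝ)))) ≤ 0 := by
  have h2 := sum_Ioo_reflect N
    (fun k => ((k:ℝ)-2)*(1 - (k:ℝ)/(N:ℝ))*Real.cot (Real.pi * ((k:ℝ)/(N:ℝ))))
  have h3 : ∑ k ∈ Finset.Ioo 0 N,
        ((((N-k:ℕ):ℝ)-2)*(1 - ((N-k:ℕ):ℝ)/(N:ℝ))*Real.cot (Real.pi * (((N-k:ℕ):ℝ)/(N:ℝ))))
      = ∑ k ∈ Finset.Ioo 0 N,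
        (-(((k:ℝ)-2)*(1 - (k:ℝ)/(N:ℝ))*Real.cot (Real.pi * ((k:ℝ)/(N:ℝ))))
          - 2*(1 - 2*((k:ℝ)/(N:ℝ)))*Real.cot (Real.pi * ((k:ℝ)/(N:ℝ)))) := by
    apply Finset.sum_congr rfl
    intro k hk
    simp only [Finset.mem_Ioo] at hk
    have hν : (0:ℝ) < (N:ℝ) := by
      have : 0 < N := lt_trans hk.1 hk.2
      exact_mod_cast this
    rw [Nat.cast_sub hk.2.le]
    have hcot : Real.cot (Real.pi * (((N:ℝ) - (k:ℝ))/(N:ℝ)))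
        = - Real.cot (Real.pi * ((k:ℝ)/(N:ℝ))) := by
      rw [show Real.pi * (((N:ℝ) - (k:ℝ))/(N:ℝ)) = Real.pi - Real.pi * ((k:ℝ)/(N:ℝ)) by
        field_simp, aux_cot_pi_sub]
    rw [hcot]
    have h1n : 1 - ((N:ℝ)-(k:ℝ))/(N:ℝ) = (k:ℝ)/(N:ℝ) := by field_simp; ring
    have h2n : 1 - (k:ℝ)/(N:ℝ) = ((N:ℝ)-(k:ℝ))/(N:ℝ) := by field_simp
    rw [h1n, h2n]
    have hNe : ((N:ℝ)) ≠ 0 := hν.ne'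
    field_simp
    ring
  have h4 : ∑ k ∈ Finset.Ioo 0 N,
      (2*(1 - 2*((k:ℝ)/(N:ℝ)))*Real.cot (Real.pi * ((k:ℝ)/(N:ℝ)))) ≥ 0 := by
    apply Finset.sum_nonneg
    intro k hk
    simp only [Finset.mem_Ioo] at hk
    have hν : (0:ℝ) < (N:ℝ) := by
      have : 0 < N := lt_trans hk.1 hk.2
      exact_mod_cast this
    have h0 : 0 < (k:ℝ)/(N:ℝ) := by
      apply div_pos _ hν
      exact_mod_cast hk.1
    have h1 : (k:ℝ)/(N:ℝ) < 1 := by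
      rw [div_lt_one hν]
      exact_mod_cast hk.2
    have := aux_cot_sign h0 h1
    nlinarith
  rw [h3, Finset.sum_sub_distrib, Finset.sum_neg_distrib] at h2
  linarith


lemma final_num {x p : ℝ} (hx : 8 ≤ x) (hp : 0 < p) :
    x*(x+2)/(3*(x+1)) + x/p + (x*(x-1)*(x-2)/(3*(x+1)^2)
      + ((2/((x+1)*p))*((x+1)*x/2 - 2*x) + (2/p + 2/((x+1)*p))))
    ≤ 32*(1/3 + 1/p)*x/16 := by
  have h1 : (0:ℝ) < x + 1 := by linarith
  have key : 32*(1/3+1/p)*x/16 = 2*x/3 + 2*x/p := by field_simp; ring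
  rw [key]
  have hcos : x*(x+2)/(3*(x+1)) + x*(x-1)*(x-2)/(3*(x+1)^2) ≤ 2*x/3 := by
    have e : x*(x+2)/(3*(x+1)) + x*(x-1)*(x-2)/(3*(x+1)^2)
        = (x*(x+2)*(x+1) + x*(x-1)*(x-2))/(3*(x+1)^2) := by
      field_simp
    rw [e, div_le_div_iff₀ (by positivity) (by norm_num : (0:ℝ) < 3)]
    nlinarith
  have hg : x/p + ((2/((x+1)*p))*((x+1)*x/2 - 2*x) + (2/p + 2/((x+1)*p))) ≤ 2*x/p := by
    have e : x/p + ((2/((x+1)*p))*((x+1)*x/2 - 2*x) + (2/p + 2/((x+1)*p)))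
        = (x*(x+1) + (x*(x+1) - 4*x) + (2*(x+1) + 2))/((x+1)*p) := by
      field_simp; ring
    rw [e, div_le_div_iff₀ (by positivity) hp]
    nlinarith [mul_nonneg (show (0:ℝ) ≤ 2*x-4 by linarith) hp.le,
      mul_nonneg (mul_nonneg (show (0:ℝ) ≤ 2*x-4 by linarith) hp.le) h1.le]
  linarith


set_option maxHeartbeats 2000000 in
/-- For `0 ≤ α ≤ β ≤ π` and `M ≥ 8`: `∑_{k=0}^{M} k·|Ξ_k| ≤ C·M/16`
with `C = 32(1/3 + 1/π)`. -/
theorem xi_weighted_sum_bound (α β : ℝ) (hα : 0 ≤ α) (hαβ : α ≤ β) (hβ : β ≤ Real.pi)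
    (M : ℕ) (hM : 8 ≤ M) :
    ∑ k ∈ Finset.range (M + 1), (k : ℝ) * |selbergXi α β M k| ≤
      32 * (1 / 3 + 1 / Real.pi) * M / 16 := by
  have hπ : 0 < Real.pi := Real.pi_pos
  have hx : (8:ℝ) ≤ (M:ℝ) := by exact_mod_cast hM
  have hν : (0:ℝ) < (M:ℝ) + 1 := by linarith
  have hcos2 : ∀ a b : ℝ, |Real.cos a + Real.cos b| ≤ 2 := fun a b =>
    (abs_add_le _ _).trans (by linarith [Real.abs_cos_le_one a, Real.abs_cos_le_one b])
  have hsin2 : ∀ a b : ℝ, |Real.sin a - Real.sin b| ≤ 2 := fun a b => by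
    rw [sub_eq_add_neg]
    exact (abs_add_le _ _).trans
      (by rw [abs_neg]; linarith [Real.abs_sin_le_one a, Real.abs_sin_le_one b])
  -- Step 1: termwise bound
  have key : ∀ k ∈ Finset.range (M+1), (k:ℝ) * |selbergXi α β M k| ≤
      (k:ℝ)*(2*(1 - (k:ℝ)/((M:ℝ)+1))/((M:ℝ)+1))
      + (k:ℝ)*((-selbergG ((k:ℝ)/((M:ℝ)+1)))*(2/((M:ℝ)+1)))
      + (if k + 2 ≤ M then
          (k:ℝ)*(2*(1 - ((k:ℝ)+2)/((M:ℝ)+1))/((M:ℝ)+1))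
          + (k:ℝ)*((-selbergG (((k:ℝ)+2)/((M:ℝ)+1)))*(2/((M:ℝ)+1)))
        else 0) := by
    intro k hk
    rcases Nat.eq_zero_or_pos k with rfl | hk1
    · simp
    have hk0 : k ≠ 0 := Nat.pos_iff_ne_zero.mp hk1
    have hkM : k ≤ M := by
      have := Finset.mem_range.mp hk; omega
    have hkr : (k:ℝ) ≤ (M:ℝ) := by exact_mod_cast hkM
    have hk1r : (1:ℝ) ≤ (k:ℝ) := by exact_mod_cast hk1
    have h1 : (0:ℝ) ≤ 1 - (k:ℝ)/((M:ℝ)+1) := by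
      rw [sub_nonneg, div_le_one hν]; linarith
    have hu0 : (0:ℝ) < (k:ℝ)/((M:ℝ)+1) := by positivity
    have hXi : |selbergXi α β M k| ≤
        2*(1 - (k:ℝ)/((M:ℝ)+1))/((M:ℝ)+1)
        + (-selbergG ((k:ℝ)/((M:ℝ)+1)))*(2/((M:ℝ)+1))
        + (if k + 2 ≤ M then
            2*(1 - ((k:ℝ)+2)/((M:ℝ)+1))/((M:ℝ)+1)
            + (-selbergG (((k:ℝ)+2)/((M:ℝ)+1)))*(2/((M:ℝ)+1))
          else 0) := by
      rw [selbergXi, if_neg hk0, if_neg hk0]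
      have tri : ∀ a b c : ℝ, |0 - a - b + c| ≤ |a| + |b| + |c| := by
        intro a b c
        have h1' : |0 - a - b| ≤ |a| + |b| := by
          simpa [sub_eq_add_neg] using abs_add_le (-a) (-b)
        calc |0 - a - b + c| ≤ |0 - a - b| + |c| := abs_add_le _ _
          _ ≤ |a| + |b| + |c| := by linarith
      refine (tri _ _ _).trans ?_
      have bt1 : |(1 - (k:ℝ)/((M:ℝ)+1)) * (Real.cos (↑k*α) + Real.cos (↑k*β)) / ((M:ℝ)+1)|
          ≤ 2*(1 - (k:ℝ)/((M:ℝ)+1))/((M:ℝ)+1) := by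
        rw [abs_div, abs_of_pos hν, abs_mul, abs_of_nonneg h1,
          div_le_div_iff₀ hν hν]
        nlinarith [mul_nonneg (mul_nonneg h1
          (sub_nonneg.2 (hcos2 ((k:ℝ)*α) ((k:ℝ)*β)))) hν.le]
      have bt2 : |selbergG ((k:ℝ)/((M:ℝ)+1)) * (Real.sin (↑k*β) - Real.sin (↑k*α)) / ((M:ℝ)+1)|
          ≤ (-selbergG ((k:ℝ)/((M:ℝ)+1)))*(2/((M:ℝ)+1)) := by
        rw [abs_div, abs_of_pos hν, abs_mul, aux_abs_g hu0]
        have hgn : (0:ℝ) ≤ -selbergG ((k:ℝ)/((M:ℝ)+1)) := neg_nonneg.2 (aux_g_nonpos hu0)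
        rw [div_le_iff₀ hν]
        have := mul_le_mul_of_nonneg_left (hsin2 ((k:ℝ)*β) ((k:ℝ)*α)) hgn
        have e : (-selbergG ((k:ℝ)/((M:ℝ)+1)))*(2/((M:ℝ)+1))*((M:ℝ)+1)
            = (-selbergG ((k:ℝ)/((M:ℝ)+1)))*2 := by field_simp
        rw [e]; exact this
      have bt3 : |(if k + 2 ≤ M then
            (1 - ((k:ℝ)+2)/((M:ℝ)+1)) * (Real.cos ((↑k+2)*α) + Real.cos ((↑k+2)*β)) / ((M:ℝ)+1)
              + selbergG (((k:ℝ)+2)/((M:ℝ)+1))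
                * (Real.sin ((↑k+2)*β) - Real.sin ((↑k+2)*α)) / ((M:ℝ)+1)
          else 0)|
          ≤ (if k + 2 ≤ M then
              2*(1 - ((k:ℝ)+2)/((M:ℝ)+1))/((M:ℝ)+1)
              + (-selbergG (((k:ℝ)+2)/((M:ℝ)+1)))*(2/((M:ℝ)+1))
            else 0) := by
        by_cases hc : k + 2 ≤ M
        · rw [if_pos hc, if_pos hc]
          have hcr : (k:ℝ)+2 ≤ (M:ℝ) := by exact_mod_cast hc
          have h1' : (0:ℝ) ≤ 1 - ((k:ℝ)+2)/((M:ℝ)+1) := by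
            rw [sub_nonneg, div_le_one hν]; linarith
          have hu0' : (0:ℝ) < ((k:ℝ)+2)/((M:ℝ)+1) := by positivity
          refine (abs_add_le _ _).trans ?_
          have b1 : |(1 - ((k:ℝ)+2)/((M:ℝ)+1)) * (Real.cos ((↑k+2)*α) + Real.cos ((↑k+2)*β)) / ((M:ℝ)+1)|
              ≤ 2*(1 - ((k:ℝ)+2)/((M:ℝ)+1))/((M:ℝ)+1) := by
            rw [abs_div, abs_of_pos hν, abs_mul, abs_of_nonneg h1',
              div_le_div_iff₀ hν hν]
            nlinarith [mul_nonneg (mul_nonneg h1'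
              (sub_nonneg.2 (hcos2 (((k:ℝ)+2)*α) (((k:ℝ)+2)*β)))) hν.le]
          have b2 : |selbergG (((k:ℝ)+2)/((M:ℝ)+1))
                * (Real.sin ((↑k+2)*β) - Real.sin ((↑k+2)*α)) / ((M:ℝ)+1)|
              ≤ (-selbergG (((k:ℝ)+2)/((M:ℝ)+1)))*(2/((M:ℝ)+1)) := by
            rw [abs_div, abs_of_pos hν, abs_mul, aux_abs_g hu0']
            have hgn : (0:ℝ) ≤ -selbergG (((k:ℝ)+2)/((M:ℝ)+1)) := neg_nonneg.2 (aux_g_nonpos hu0')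
            rw [div_le_iff₀ hν]
            have := mul_le_mul_of_nonneg_left (hsin2 (((k:ℝ)+2)*β) (((k:ℝ)+2)*α)) hgn
            have e : (-selbergG (((k:ℝ)+2)/((M:ℝ)+1)))*(2/((M:ℝ)+1))*((M:ℝ)+1)
                = (-selbergG (((k:ℝ)+2)/((M:ℝ)+1)))*2 := by field_simp
            rw [e]; exact this
          linarith
        · rw [if_neg hc, if_neg hc]; simp
      linarith
    calc (k:ℝ) * |selbergXi α β M k|
        ≤ (k:ℝ) * (2*(1 - (k:ℝ)/((M:ℝ)+1))/((M:ℝ)+1)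
          + (-selbergG ((k:ℝ)/((M:ℝ)+1)))*(2/((M:ℝ)+1))
          + (if k + 2 ≤ M then
              2*(1 - ((k:ℝ)+2)/((M:ℝ)+1))/((M:ℝ)+1)
              + (-selbergG (((k:ℝ)+2)/((M:ℝ)+1)))*(2/((M:ℝ)+1))
            else 0)) := mul_le_mul_of_nonneg_left hXi (by positivity)
      _ = _ := by
          by_cases hc : k + 2 ≤ M <;> simp only [hc, if_true, if_false, ite_true, ite_false] <;> ring
  refine (Finset.sum_le_sum key).trans ?_
  rw [Finset.sum_add_distrib, Finset.sum_add_distrib]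
  -- helper sums
  have hIoo : Finset.Ioo 0 (M+1) ⊆ Finset.range (M+1) := fun k hk => by
    simp only [Finset.mem_Ioo] at hk; exact Finset.mem_range.mpr hk.2
  have hzero : ∀ (F : ℕ → ℝ), (∑ k ∈ Finset.range (M+1), (k:ℝ) * F k)
      = ∑ k ∈ Finset.Ioo 0 (M+1), (k:ℝ) * F k := by
    intro F
    rw [← Finset.sum_subset hIoo (fun x hx hnx => ?_)]
    simp only [Finset.mem_range] at hx
    simp only [Finset.mem_Ioo] at hnx
    have : x = 0 := by omega
    simp [this]
  have hIooSum : ∑ k ∈ Finset.Ioo 0 (M+1), (k:ℝ) = ((M:ℝ)+1)*(M:ℝ)/2 := by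
    have h := hzero (fun _ => (1:ℝ))
    simp only [mul_one] at h
    rw [← h, sum_range_cast]
    push_cast; ring
  have hcastM : ((M+1:ℕ):ℝ) = (M:ℝ)+1 := by push_cast; ring
  -- S1
  have hS1 : ∑ k ∈ Finset.range (M+1), (k:ℝ)*(2*(1-(k:ℝ)/((M:ℝ)+1))/((M:ℝ)+1))
      = (M:ℝ)*((M:ℝ)+2)/(3*((M:ℝ)+1)) := by
    have e : ∀ k ∈ Finset.range (M+1), (k:ℝ)*(2*(1-(k:ℝ)/((M:ℝ)+1))/((M:ℝ)+1))
        = (2/((M:ℝ)+1))*(k:ℝ) - (2/((M:ℝ)+1)^2)*(k:ℝ)^2 := by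
      intro k _; field_simp
    rw [Finset.sum_congr rfl e, Finset.sum_sub_distrib, ← Finset.mul_sum, ← Finset.mul_sum,
      sum_range_cast, sum_range_cast_sq]
    push_cast
    field_simp
    ring
  -- S2
  have hS2 : ∑ k ∈ Finset.range (M+1), (k:ℝ)*((-selbergG ((k:ℝ)/((M:ℝ)+1)))*(2/((M:ℝ)+1)))
      = (M:ℝ)/Real.pi := by
    rw [hzero]
    have e : ∀ k ∈ Finset.Ioo 0 (M+1),
        (k:ℝ)*((-selbergG ((k:ℝ)/((M:ℝ)+1)))*(2/((M:ℝ)+1)))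
        = (2/((M:ℝ)+1)) * ((k:ℝ)*(1-(k:ℝ)/((M:ℝ)+1))*Real.cot (Real.pi*((k:ℝ)/((M:ℝ)+1))))
          + (2/(((M:ℝ)+1)*Real.pi))*(k:ℝ) := by
      intro k hk
      simp only [Finset.mem_Ioo] at hk
      have hu1 : (k:ℝ)/((M:ℝ)+1) < 1 := by
        rw [div_lt_one hν]
        have : (k:ℝ) < (M:ℝ)+1 := by exact_mod_cast hk.2
        linarith
      rw [aux_negG hu1]
      field_simp
    rw [Finset.sum_congr rfl e, Finset.sum_add_distrib, ← Finset.mul_sum, ← Finset.mul_sum]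
    have hp := pair_sum_zero (M+1)
    rw [hcastM] at hp
    rw [hp, hIooSum]
    field_simp
    ring
  -- reduce the ite-sum to range (M-1)
  have hsub : ∀ (F : ℕ → ℝ), ∑ k ∈ Finset.range (M+1), (if k+2 ≤ M then F k else 0)
      = ∑ k ∈ Finset.range (M-1), F k := by
    intro F
    have h1 : ∑ k ∈ Finset.range (M-1), (if k+2 ≤ M then F k else 0)
        = ∑ k ∈ Finset.range (M+1), (if k+2 ≤ M then F k else 0) :=
      Finset.sum_subset (Finset.range_subset_range.mpr (by omega))
        (fun x hx hnx => by
          rw [if_neg]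
          simp only [Finset.mem_range] at hx hnx
          omega)
    rw [← h1]
    exact Finset.sum_congr rfl fun k hk => if_pos (by simp only [Finset.mem_range] at hk; omega)
  rw [hsub, Finset.sum_add_distrib]
  -- S3
  have hM1 : ((M-1:ℕ):ℝ) = (M:ℝ)-1 := by
    have h1 : 1 ≤ M := by omega
    push_cast [h1]
    ring
  have hS3 : ∑ k ∈ Finset.range (M-1), (k:ℝ)*(2*(1-((k:ℝ)+2)/((M:ℝ)+1))/((M:ℝ)+1))
      = (M:ℝ)*((M:ℝ)-1)*((M:ℝ)-2)/(3*((M:ℝ)+1)^2) := by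
    have e : ∀ k ∈ Finset.range (M-1), (k:ℝ)*(2*(1-((k:ℝ)+2)/((M:ℝ)+1))/((M:ℝ)+1))
        = ((2*((M:ℝ)-1))/((M:ℝ)+1)^2)*(k:ℝ) - (2/((M:ℝ)+1)^2)*(k:ℝ)^2 := by
      intro k _; field_simp; ring
    rw [Finset.sum_congr rfl e, Finset.sum_sub_distrib, ← Finset.mul_sum, ← Finset.mul_sum,
      sum_range_cast, sum_range_cast_sq, hM1]
    have h8 : (8:ℝ) ≤ (M:ℝ) := hx
    field_simp
    ring
  -- S4
  have hS4 : ∑ k ∈ Finset.range (M-1), (k:ℝ)*((-selbergG (((k:ℝ)+2)/((M:ℝ)+1)))*(2/((M:ℝ)+1)))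
      ≤ (2/(((M:ℝ)+1)*Real.pi))*(((M:ℝ)+1)*(M:ℝ)/2 - 2*(M:ℝ))
        + (2/Real.pi + 2/(((M:ℝ)+1)*Real.pi)) := by
    have hre : ∑ k ∈ Finset.range (M-1), (k:ℝ)*((-selbergG (((k:ℝ)+2)/((M:ℝ)+1)))*(2/((M:ℝ)+1)))
        = ∑ j ∈ Finset.Ico 2 (M+1), ((j:ℝ)-2)*((-selbergG ((j:ℝ)/((M:ℝ)+1)))*(2/((M:ℝ)+1))) := by
      rw [Finset.sum_Ico_eq_sum_range]
      have h2 : M+1-2 = M-1 := by omega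
      rw [h2]
      apply Finset.sum_congr rfl
      intro k _
      push_cast
      rw [show (2:ℝ)+(k:ℝ) = (k:ℝ)+2 by ring]
      ring
    rw [hre]
    have hsplit : ∑ j ∈ Finset.Ioo 0 (M+1), ((j:ℝ)-2)*((-selbergG ((j:ℝ)/((M:ℝ)+1)))*(2/((M:ℝ)+1)))
        = ((1:ℝ)-2)*((-selbergG ((1:ℝ)/((M:ℝ)+1)))*(2/((M:ℝ)+1)))
          + ∑ j ∈ Finset.Ico 2 (M+1), ((j:ℝ)-2)*((-selbergG ((j:ℝ)/((M:ℝ)+1)))*(2/((M:ℝ)+1))) := by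
      rw [← Finset.Ico_succ_left_eq_Ioo]
      have := Finset.sum_eq_sum_Ico_succ_bot (show 1 < M+1 by omega)
        (fun j => ((j:ℝ)-2)*((-selbergG ((j:ℝ)/((M:ℝ)+1)))*(2/((M:ℝ)+1))))
      simpa using this
    have hIooBound : ∑ j ∈ Finset.Ioo 0 (M+1), ((j:ℝ)-2)*((-selbergG ((j:ℝ)/((M:ℝ)+1)))*(2/((M:ℝ)+1)))
        ≤ (2/(((M:ℝ)+1)*Real.pi))*(((M:ℝ)+1)*(M:ℝ)/2 - 2*(M:ℝ)) := by
      have e : ∀ j ∈ Finset.Ioo 0 (M+1),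
          ((j:ℝ)-2)*((-selbergG ((j:ℝ)/((M:ℝ)+1)))*(2/((M:ℝ)+1)))
          = (2/((M:ℝ)+1)) * (((j:ℝ)-2)*(1-(j:ℝ)/((M:ℝ)+1))*Real.cot (Real.pi*((j:ℝ)/((M:ℝ)+1))))
            + (2/(((M:ℝ)+1)*Real.pi))*((j:ℝ)-2) := by
        intro j hj
        simp only [Finset.mem_Ioo] at hj
        have hu1 : (j:ℝ)/((M:ℝ)+1) < 1 := by
          rw [div_lt_one hν]
          have : (j:ℝ) < (M:ℝ)+1 := by exact_mod_cast hj.2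
          linarith
        rw [aux_negG hu1]
        field_simp
      rw [Finset.sum_congr rfl e, Finset.sum_add_distrib, ← Finset.mul_sum, ← Finset.mul_sum]
      have hpair := pair_sum_nonpos (M+1)
      rw [hcastM] at hpair
      have hconst : ∑ j ∈ Finset.Ioo 0 (M+1), ((j:ℝ)-2) = ((M:ℝ)+1)*(M:ℝ)/2 - 2*(M:ℝ) := by
        rw [Finset.sum_sub_distrib, hIooSum, Finset.sum_const, Nat.card_Ioo]
        simp only [nsmul_eq_mul]
        have : ((M+1-0-1:ℕ):ℝ) = (M:ℝ) := by push_cast; ring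
        rw [this]
        ring
      rw [hconst]
      have h2ν : (0:ℝ) ≤ 2/((M:ℝ)+1) := by positivity
      nlinarith [mul_nonpos_of_nonneg_of_nonpos h2ν hpair]
    have hG1 : -(((1:ℝ)-2)*((-selbergG ((1:ℝ)/((M:ℝ)+1)))*(2/((M:ℝ)+1))))
        ≤ 2/Real.pi + 2/(((M:ℝ)+1)*Real.pi) := by
      have hu1 : (1:ℝ)/((M:ℝ)+1) < 1 := by
        rw [div_lt_one hν]; linarith
      have e1 : -(((1:ℝ)-2)*((-selbergG ((1:ℝ)/((M:ℝ)+1)))*(2/((M:ℝ)+1))))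
          = (-selbergG ((1:ℝ)/((M:ℝ)+1)))*(2/((M:ℝ)+1)) := by ring
      rw [e1, aux_negG hu1]
      have hcl : Real.cot (Real.pi*((1:ℝ)/((M:ℝ)+1))) ≤ ((M:ℝ)+1)/Real.pi := by
        have h := aux_cot_le_inv (x := Real.pi*((1:ℝ)/((M:ℝ)+1))) (by positivity)
          (by
            have hlt : (1:ℝ)/((M:ℝ)+1) < 1 := by
              rw [div_lt_one hν]; linarith
            nlinarith)
        calc Real.cot (Real.pi*((1:ℝ)/((M:ℝ)+1))) ≤ 1/(Real.pi*((1:ℝ)/((M:ℝ)+1))) := h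
          _ = ((M:ℝ)+1)/Real.pi := by field_simp
      have hcpos : 0 ≤ Real.cot (Real.pi*((1:ℝ)/((M:ℝ)+1))) := by
        rw [Real.cot_eq_cos_div_sin]
        apply div_nonneg
        · apply Real.cos_nonneg_of_mem_Icc
          constructor
          · have : 0 ≤ Real.pi*((1:ℝ)/((M:ℝ)+1)) := by positivity
            linarith [hπ]
          · rw [mul_one_div, div_le_div_iff₀ hν (by norm_num : (0:ℝ) < 2)]
            nlinarith
        · exact (aux_sin_pos (by positivity) hu1).le
      have step1 : (1-(1:ℝ)/((M:ℝ)+1))*Real.cot (Real.pi*((1:ℝ)/((M:ℝ)+1))) + 1/Real.pi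
          ≤ ((M:ℝ)+1)/Real.pi + 1/Real.pi := by
        have h11 : (1-(1:ℝ)/((M:ℝ)+1)) ≤ 1 := by
          have : (0:ℝ) ≤ 1/((M:ℝ)+1) := by positivity
          linarith
        have h12 : (1-(1:ℝ)/((M:ℝ)+1))*Real.cot (Real.pi*((1:ℝ)/((M:ℝ)+1)))
            ≤ Real.cot (Real.pi*((1:ℝ)/((M:ℝ)+1))) := by
          nlinarith
        linarith
      have step2 : ((1-(1:ℝ)/((M:ℝ)+1))*Real.cot (Real.pi*((1:ℝ)/((M:ℝ)+1))) + 1/Real.pi)*(2/((M:ℝ)+1))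
          ≤ (((M:ℝ)+1)/Real.pi + 1/Real.pi)*(2/((M:ℝ)+1)) :=
        mul_le_mul_of_nonneg_right step1 (by positivity)
      have step3 : (((M:ℝ)+1)/Real.pi + 1/Real.pi)*(2/((M:ℝ)+1))
          = 2/Real.pi + 2/(((M:ℝ)+1)*Real.pi) := by
        field_simp
      calc ((1-(1:ℝ)/((M:ℝ)+1))*Real.cot (Real.pi*((1:ℝ)/((M:ℝ)+1))) + 1/Real.pi)*(2/((M:ℝ)+1))
          ≤ (((M:ℝ)+1)/Real.pi + 1/Real.pi)*(2/((M:ℝ)+1)) := step2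
        _ = 2/Real.pi + 2/(((M:ℝ)+1)*Real.pi) := step3
    linarith [hsplit, hIooBound, hG1]
  rw [hS1, hS2, hS3]
  have := final_num hx hπ
  linarith [hS4, this]
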